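/- arXiv:2311.05529 — 5 statements merged into one kernel-verified Lean document; each statement's English description precedes it below -/
import Mathlib

section
/- For density matrices ρ and σ on a finite-dimensional Hilbert space with the support of ρ contained in the support of σ, the quantum relative entropy D(ρ‖σ) is at least tr(ρH) − log tr(exp(log σ + H)) for every Hermitian matrix H. -/
open Matrix Kronecker ComplexOrder

noncomputable section

/-- Matrix exponential. -/
noncomputable def mexp {ι : Type*} [Fintype ι] [DecidableEq ι] (A : Matrix ι ι ℂ) :
    Matrix ι ι ℂ := NormedSpace.exp A

/-- Matrix logarithm of a Hermitian matrix, taken on its support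
(zero eigenvalues are mapped to zero, since `Real.log 0 = 0`). -/
noncomputable def matLog {ι : Type*} [Fintype ι] [DecidableEq ι] (A : Matrix ι ι ℂ) :
    Matrix ι ι ℂ :=
  if hA : A.IsHermitian then
    (hA.eigenvectorUnitary : Matrix ι ι ℂ) *
      Matrix.diagonal (fun i => (Real.log (hA.eigenvalues i) : ℂ)) *
      (star (hA.eigenvectorUnitary : Matrix ι ι ℂ))
  else 0

/-- A density matrix: positive semidefinite with unit trace. -/
def IsDensity {ι : Type*} [Fintype ι] (ρ : Matrix ι ι ℂ) : Prop :=
  ρ.PosSemidef ∧ ρ.trace = 1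

/-- `supp ρ ⊆ supp σ`, expressed as kernel containment `ker σ ⊆ ker ρ`. -/
def SuppLE {ι : Type*} [Fintype ι] (ρ σ : Matrix ι ι ℂ) : Prop :=
  ∀ v : ι → ℂ, σ.mulVec v = 0 → ρ.mulVec v = 0

/-- Quantum relative entropy `D(ρ‖σ) = tr(ρ (log ρ - log σ))`. -/
noncomputable def relEnt {ι : Type*} [Fintype ι] [DecidableEq ι] (ρ σ : Matrix ι ι ℂ) : ℝ :=
  (Matrix.trace (ρ * (matLog ρ - matLog σ))).re

/-- Von Neumann entropy `H(ρ) = -tr(ρ log ρ)`. -/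
noncomputable def vnEntropy {ι : Type*} [Fintype ι] [DecidableEq ι] (ρ : Matrix ι ι ℂ) : ℝ :=
  - (Matrix.trace (ρ * matLog ρ)).re

/-- `L` is `α`-sub-gaussian w.r.t. the state `σ`:
`log tr(σ exp(λ(L - tr(Lσ)·I))) ≤ α²λ²/2` for all real `λ`. -/
def IsSubGaussianObs {ι : Type*} [Fintype ι] [DecidableEq ι]
    (L σ : Matrix ι ι ℂ) (α : ℝ) : Prop :=
  ∀ l : ℝ, Real.log ((Matrix.trace
      (σ * mexp ((l : ℂ) • (L - (Matrix.trace (L * σ)) • (1 : Matrix ι ι ℂ))))).re)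
    ≤ α ^ 2 * l ^ 2 / 2

/-- Partial trace over the first tensor factor. -/
noncomputable def ptraceFst {α β : Type*} [Fintype α]
    (ρ : Matrix (α × β) (α × β) ℂ) : Matrix β β ℂ :=
  Matrix.of fun i j => ∑ a, ρ (a, i) (a, j)

/-- Partial trace over the second tensor factor. -/
noncomputable def ptraceSnd {α β : Type*} [Fintype β]
    (ρ : Matrix (α × β) (α × β) ℂ) : Matrix α α ℂ :=
  Matrix.of fun i j => ∑ b, ρ (i, b) (j, b)

section PetzHelpers

variable {ι : Type*} [Fintype ι] [DecidableEq ι]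

lemma petz_ofReal_eq : (RCLike.ofReal : ℝ → ℂ) = Complex.ofReal := rfl

lemma petz_unitary_conj_isHermitian (U : Matrix ι ι ℂ) (d : ι → ℝ) :
    (U * Matrix.diagonal (fun i => (d i : ℂ)) * star U).IsHermitian := by
  have hD : (Matrix.diagonal (fun i => (d i : ℂ))).IsHermitian :=
    Matrix.isHermitian_diagonal_iff.mpr fun i => Complex.conj_ofReal _
  simpa [Matrix.star_eq_conjTranspose] using Matrix.isHermitian_mul_mul_conjTranspose U hD

lemma matLog_isHermitian (A : Matrix ι ι ℂ) : (matLog A).IsHermitian := by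
  unfold matLog
  split_ifs with hA
  · exact petz_unitary_conj_isHermitian _ _
  · exact Matrix.isHermitian_zero

lemma petz_trace_unitary_conj {U : Matrix ι ι ℂ} (hU : U ∈ Matrix.unitaryGroup ι ℂ)
    (D : Matrix ι ι ℂ) : Matrix.trace (U * D * star U) = Matrix.trace D := by
  rw [Matrix.trace_mul_cycle, Matrix.mem_unitaryGroup_iff'.mp hU, Matrix.one_mul]

lemma petz_exp_unitary_conj {U : Matrix ι ι ℂ} (hU : U ∈ Matrix.unitaryGroup ι ℂ)
    (D : Matrix ι ι ℂ) :
    NormedSpace.exp (U * D * star U) = U * NormedSpace.exp D * star U := by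
  have h1 : star U * U = 1 := Matrix.mem_unitaryGroup_iff'.mp hU
  have h2 : U * star U = 1 := Matrix.mem_unitaryGroup_iff.mp hU
  have hinv : U⁻¹ = star U := Matrix.inv_eq_left_inv h1
  have hu : IsUnit U := ⟨⟨U, star U, h2, h1⟩, rfl⟩
  rw [← hinv]
  exact Matrix.exp_conj U D hu

lemma petz_trace_conj_conj {V : Matrix ι ι ℂ} (U : Matrix ι ι ℂ) (d e : ι → ℂ) :
    Matrix.trace (V * Matrix.diagonal d * star V * (U * Matrix.diagonal e * star U))
      = ∑ i, ∑ j, d i * e j * ((star V * U) i j * star ((star V * U) i j)) := by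
  have h0 : Matrix.trace (V * Matrix.diagonal d * star V * (U * Matrix.diagonal e * star U))
      = Matrix.trace (Matrix.diagonal d * (star V * U) * Matrix.diagonal e
          * star (star V * U)) := by
    rw [Matrix.mul_assoc V, Matrix.mul_assoc V, Matrix.trace_mul_comm V]
    congr 1
    simp only [StarMul.star_mul, star_star, Matrix.mul_assoc]
  rw [h0, Matrix.trace]
  refine Finset.sum_congr rfl fun i _ => ?_
  rw [Matrix.diag_apply, Matrix.mul_apply]
  refine Finset.sum_congr rfl fun j _ => ?_
  rw [Matrix.mul_diagonal, Matrix.diagonal_mul, Matrix.star_apply]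
  ring

lemma petz_trace_conj_conj_same {V : Matrix ι ι ℂ} (hV : V ∈ Matrix.unitaryGroup ι ℂ)
    (d e : ι → ℂ) :
    Matrix.trace (V * Matrix.diagonal d * star V * (V * Matrix.diagonal e * star V))
      = ∑ i, d i * e i := by
  have h : star V * V = 1 := Matrix.mem_unitaryGroup_iff'.mp hV
  have h1 : (V * Matrix.diagonal d * star V) * (V * Matrix.diagonal e * star V)
      = V * (Matrix.diagonal d * Matrix.diagonal e) * star V := by
    simp only [Matrix.mul_assoc]
    rw [← Matrix.mul_assoc (star V) V (Matrix.diagonal e * star V), h, Matrix.one_mul]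
  rw [h1, petz_trace_unitary_conj hV, Matrix.diagonal_mul_diagonal, Matrix.trace_diagonal]

end PetzHelpers

/-- **Petz's variational lower bound.** For density matrices `ρ, σ` with
`supp ρ ⊆ supp σ` and any Hermitian `H`,
`D(ρ‖σ) ≥ tr(ρH) − log tr(exp(log σ + H))`. -/
theorem petz_variational_lower_bound {n : ℕ} (ρ σ : Matrix (Fin n) (Fin n) ℂ)
    (hρ : IsDensity ρ) (hσ : IsDensity σ) (hsupp : SuppLE ρ σ)
    (H : Matrix (Fin n) (Fin n) ℂ) (hH : H.IsHermitian) :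
    (Matrix.trace (ρ * H)).re - Real.log ((Matrix.trace (mexp (matLog σ + H))).re)
      ≤ relEnt ρ σ := by
  classical
  obtain ⟨hρpsd, hρtr⟩ := hρ
  have hρH : ρ.IsHermitian := hρpsd.1
  have hA : (matLog σ + H).IsHermitian := (matLog_isHermitian σ).add hH
  have hn : Nonempty (Fin n) := by
    by_contra h
    rw [not_nonempty_iff] at h
    have h0 : Matrix.trace ρ = 0 := by simp [Matrix.trace]
    rw [h0] at hρtr
    exact zero_ne_one hρtr
  set p : Fin n → ℝ := hρH.eigenvalues with hp
  set a : Fin n → ℝ := hA.eigenvalues with ha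
  set V : Matrix (Fin n) (Fin n) ℂ := (hρH.eigenvectorUnitary : Matrix (Fin n) (Fin n) ℂ)
    with hVdef
  set U : Matrix (Fin n) (Fin n) ℂ := (hA.eigenvectorUnitary : Matrix (Fin n) (Fin n) ℂ)
    with hUdef
  have hVmem : V ∈ Matrix.unitaryGroup (Fin n) ℂ := hρH.eigenvectorUnitary.2
  have hUmem : U ∈ Matrix.unitaryGroup (Fin n) ℂ := hA.eigenvectorUnitary.2
  set W : Matrix (Fin n) (Fin n) ℂ := star V * U with hWdef
  have hWmem : W ∈ Matrix.unitaryGroup (Fin n) ℂ := mul_mem (Unitary.star_mem hVmem) hUmem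
  set c : Fin n → Fin n → ℝ := fun i j => Complex.normSq (W i j) with hc
  have hcnn : ∀ i j, 0 ≤ c i j := fun i j => Complex.normSq_nonneg _
  have hWsq : ∀ i j, W i j * star (W i j) = ((c i j : ℝ) : ℂ) := by
    intro i j
    rw [hc]
    rw [congrFun Complex.star_def (W i j)]
    exact Complex.mul_conj _
  have hρspec : ρ = V * Matrix.diagonal (fun i => ((p i : ℝ) : ℂ)) * star V :=
    hρH.spectral_theorem
  have hAspec : matLog σ + H = U * Matrix.diagonal (fun j => ((a j : ℝ) : ℂ)) * star U :=
    hA.spectral_theorem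
  have hlogρ : matLog ρ = V * Matrix.diagonal (fun i => ((Real.log (p i) : ℝ) : ℂ)) * star V := by
    simp only [matLog, dif_pos hρH]
    rfl
  have hppos : ∀ i, 0 ≤ p i := fun i => hρpsd.eigenvalues_nonneg i
  -- sum of eigenvalues of ρ is 1
  have hsum_p : ∑ i, p i = 1 := by
    have htrρ : Matrix.trace ρ = ∑ i, ((p i : ℝ) : ℂ) := by
      conv_lhs => rw [hρspec]
      rw [petz_trace_unitary_conj hVmem, Matrix.trace_diagonal]
    have h2 := congrArg Complex.re (htrρ.symm.trans hρtr)
    simpa [Complex.re_sum] using h2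
  -- partition function
  set Z : ℝ := ∑ j, Real.exp (a j) with hZ
  have hZpos : 0 < Z := Finset.sum_pos (fun j _ => Real.exp_pos _) Finset.univ_nonempty
  have hmexp : mexp (matLog σ + H)
      = U * Matrix.diagonal (fun j => Complex.exp ((a j : ℝ) : ℂ)) * star U := by
    unfold mexp
    conv_lhs => rw [hAspec]
    rw [petz_exp_unitary_conj hUmem, Matrix.exp_diagonal]
    have hfun : (NormedSpace.exp fun j => ((a j : ℝ) : ℂ))
        = fun j => Complex.exp ((a j : ℝ) : ℂ) := by
      funext j
      rw [Pi.coe_exp, Complex.exp_eq_exp_ℂ]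
    rw [hfun]
  have htrexp : (Matrix.trace (mexp (matLog σ + H))).re = Z := by
    rw [hmexp, petz_trace_unitary_conj hUmem, Matrix.trace_diagonal, Complex.re_sum, hZ]
    exact Finset.sum_congr rfl fun j _ => Complex.exp_ofReal_re _
  -- trace of ρ log ρ
  have h5 : (Matrix.trace (ρ * matLog ρ)).re = ∑ i, p i * Real.log (p i) := by
    have h5c : Matrix.trace (ρ * matLog ρ)
        = ∑ i, ((p i : ℝ) : ℂ) * ((Real.log (p i) : ℝ) : ℂ) := by
      have e1 : Matrix.trace (ρ * matLog ρ)
          = Matrix.trace (V * Matrix.diagonal (fun i => ((p i : ℝ) : ℂ)) * star V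
              * (V * Matrix.diagonal (fun i => ((Real.log (p i) : ℝ) : ℂ)) * star V)) := by
        rw [← hρspec, ← hlogρ]
      rw [e1]
      exact petz_trace_conj_conj_same hVmem _ _
    rw [h5c, Complex.re_sum]
    refine Finset.sum_congr rfl fun i _ => ?_
    rw [← Complex.ofReal_mul, Complex.ofReal_re]
  -- trace of ρ (log σ + H)
  have htrρA : (Matrix.trace (ρ * (matLog σ + H))).re = ∑ i, ∑ j, p i * a j * c i j := by
    have e1 : Matrix.trace (ρ * (matLog σ + H))
        = Matrix.trace (V * Matrix.diagonal (fun i => ((p i : ℝ) : ℂ)) * star V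
            * (U * Matrix.diagonal (fun j => ((a j : ℝ) : ℂ)) * star U)) := by
      rw [← hρspec, ← hAspec]
    rw [e1, petz_trace_conj_conj, Complex.re_sum]
    refine Finset.sum_congr rfl fun i _ => ?_
    rw [Complex.re_sum]
    refine Finset.sum_congr rfl fun j _ => ?_
    rw [← hWdef, hWsq, ← Complex.ofReal_mul, ← Complex.ofReal_mul, Complex.ofReal_re]
  -- row and column sums of c
  have hrow : ∀ i, ∑ j, c i j = 1 := by
    intro i
    have h2 : (W * star W) i i = (1 : Matrix (Fin n) (Fin n) ℂ) i i := by
      rw [Matrix.mem_unitaryGroup_iff.mp hWmem]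
    rw [Matrix.mul_apply, Matrix.one_apply_eq] at h2
    have h3 : ∑ j, ((c i j : ℝ) : ℂ) = 1 := by
      rw [← h2]
      exact Finset.sum_congr rfl fun j _ => by rw [Matrix.star_apply, hWsq]
    exact_mod_cast h3
  have hcol : ∀ j, ∑ i, c i j = 1 := by
    intro j
    have h2 : (star W * W) j j = (1 : Matrix (Fin n) (Fin n) ℂ) j j := by
      rw [Matrix.mem_unitaryGroup_iff'.mp hWmem]
    rw [Matrix.mul_apply, Matrix.one_apply_eq] at h2
    have h3 : ∑ i, ((c i j : ℝ) : ℂ) = 1 := by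
      rw [← h2]
      exact Finset.sum_congr rfl fun i _ => by
        rw [Matrix.star_apply, mul_comm, hWsq]
    exact_mod_cast h3
  -- the main inequality
  have hmain : ∑ i, ∑ j, p i * a j * c i j ≤ (∑ i, p i * Real.log (p i)) + Real.log Z := by
    set q : Fin n → ℝ := fun j => Real.exp (a j) / Z with hq
    have hqpos : ∀ j, 0 < q j := fun j => div_pos (Real.exp_pos _) hZpos
    have hqsum : ∑ j, q j = 1 := by
      rw [hq, ← Finset.sum_div]
      exact div_self hZpos.ne'
    have hlogq : ∀ j, a j = Real.log (q j) + Real.log Z := by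
      intro j
      rw [hq]
      rw [Real.log_div (Real.exp_pos _).ne' hZpos.ne', Real.log_exp]
      ring
    have hpoint : ∀ i j, p i * a j * c i j
        ≤ c i j * (p i * Real.log (p i) - p i + p i * Real.log Z + q j) := by
      intro i j
      have hkey : p i * a j ≤ p i * Real.log (p i) - p i + p i * Real.log Z + q j := by
        rw [hlogq j]
        rcases eq_or_lt_of_le (hppos i) with h0 | h0
        · rw [← h0]
          simpa using (hqpos j).le
        · have hlog := Real.log_le_sub_one_of_pos (div_pos (hqpos j) h0)
          rw [Real.log_div (hqpos j).ne' h0.ne'] at hlog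
          have h1 := mul_le_mul_of_nonneg_left hlog h0.le
          have h2 : p i * (q j / p i) = q j := by field_simp
          nlinarith [h1, h2]
      calc p i * a j * c i j = c i j * (p i * a j) := by ring
        _ ≤ _ := mul_le_mul_of_nonneg_left hkey (hcnn i j)
    calc ∑ i, ∑ j, p i * a j * c i j
        ≤ ∑ i, ∑ j, c i j * (p i * Real.log (p i) - p i + p i * Real.log Z + q j) :=
          Finset.sum_le_sum fun i _ => Finset.sum_le_sum fun j _ => hpoint i j
      _ = ∑ i, (∑ j, c i j * (p i * Real.log (p i) - p i + p i * Real.log Z))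
            + ∑ i, ∑ j, c i j * q j := by
          rw [← Finset.sum_add_distrib]
          refine Finset.sum_congr rfl fun i _ => ?_
          rw [← Finset.sum_add_distrib]
          exact Finset.sum_congr rfl fun j _ => by ring
      _ = ∑ i, (p i * Real.log (p i) - p i + p i * Real.log Z) + ∑ j, q j := by
          congr 1
          · refine Finset.sum_congr rfl fun i _ => ?_
            rw [← Finset.sum_mul, hrow i, one_mul]
          · rw [Finset.sum_comm]
            refine Finset.sum_congr rfl fun j _ => ?_
            rw [← Finset.sum_mul, hcol j, one_mul]
      _ = (∑ i, p i * Real.log (p i)) + Real.log Z := by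
          have h1 : ∑ i, (p i * Real.log (p i) - p i + p i * Real.log Z)
              = (∑ i, p i * Real.log (p i)) - (∑ i, p i) + (∑ i, p i) * Real.log Z := by
            rw [Finset.sum_mul]
            simp [Finset.sum_add_distrib, Finset.sum_sub_distrib]
          rw [h1, hsum_p, hqsum]
          ring
  -- assemble
  have hsplit : (Matrix.trace (ρ * (matLog σ + H))).re
      = (Matrix.trace (ρ * matLog σ)).re + (Matrix.trace (ρ * H)).re := by
    rw [Matrix.mul_add, Matrix.trace_add, Complex.add_re]
  have hrel : relEnt ρ σ
      = (Matrix.trace (ρ * matLog ρ)).re - (Matrix.trace (ρ * matLog σ)).re := by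
    unfold relEnt
    rw [Matrix.mul_sub, Matrix.trace_sub, Complex.sub_re]
  rw [hrel, htrexp, h5]
  rw [hsplit] at htrρA
  linarith [hmain, htrρA]
end
end

section
/- Let L = (1/m) Σᵢ Lᵢ where each Lᵢ = I^{⊗(i−1)} ⊗ L̃ᵢ ⊗ I^{⊗(m−i)} acts nontrivially only on the i-th factor of an m-fold tensor product, and suppose each L̃ᵢ is αᵢ-sub-gaussian with respect to a state τᵢ. Then L is α-sub-gaussian with respect to τ₁ ⊗ ⋯ ⊗ τ_m with α = (1/m)·√(Σᵢ αᵢ²). -/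
open Matrix Kronecker ComplexOrder

noncomputable section

/-- The observable acting as `M` on the `i`-th tensor factor and as the
identity elsewhere. -/
noncomputable def embedAt (m d : ℕ) (i : Fin m) (M : Matrix (Fin d) (Fin d) ℂ) :
    Matrix (Fin m → Fin d) (Fin m → Fin d) ℂ :=
  Matrix.of fun x y =>
    M (x i) (y i) * ∏ j ∈ Finset.univ.erase i, (if x j = y j then (1 : ℂ) else 0)

/-- The tensor product state `τ₁ ⊗ ⋯ ⊗ τ_m`. -/
noncomputable def tensorPow (m d : ℕ) (τ : Fin m → Matrix (Fin d) (Fin d) ℂ) :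
    Matrix (Fin m → Fin d) (Fin m → Fin d) ℂ :=
  Matrix.of fun x y => ∏ i, τ i (x i) (y i)

set_option linter.unusedSectionVars false
set_option linter.unusedVariables false

section Helpers

variable {m d : ℕ}

lemma tensorPow_mul (f g : Fin m → Matrix (Fin d) (Fin d) ℂ) :
    tensorPow m d f * tensorPow m d g = tensorPow m d (fun i => f i * g i) := by
  ext x y
  simp only [Matrix.mul_apply, tensorPow, Matrix.of_apply, ← Finset.prod_mul_distrib]
  rw [← Fintype.piFinset_univ, Finset.prod_univ_sum]

lemma tensorPow_one : tensorPow m d (fun _ => (1 : Matrix (Fin d) (Fin d) ℂ)) = 1 := by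
  ext x y
  simp only [tensorPow, Matrix.of_apply, Matrix.one_apply]
  rw [Finset.prod_boole]
  simp [funext_iff]

lemma embedAt_eq (i : Fin m) (M : Matrix (Fin d) (Fin d) ℂ) :
    embedAt m d i M = tensorPow m d (fun j => if j = i then M else 1) := by
  ext x y
  simp only [embedAt, tensorPow, Matrix.of_apply]
  rw [← Finset.mul_prod_erase Finset.univ _ (Finset.mem_univ i)]
  congr 1
  · simp
  · refine Finset.prod_congr rfl fun j hj => ?_
    have hji : j ≠ i := Finset.ne_of_mem_erase hj
    simp [hji, Matrix.one_apply]

end Helpers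
section Helpers2

variable {m d : ℕ}

lemma embedAt_mul (i : Fin m) (A B : Matrix (Fin d) (Fin d) ℂ) :
    embedAt m d i A * embedAt m d i B = embedAt m d i (A * B) := by
  rw [embedAt_eq, embedAt_eq, embedAt_eq, tensorPow_mul]
  refine congrArg (tensorPow m d) (funext fun j => ?_)
  by_cases h : j = i <;> simp [h]

lemma embedAt_one (i : Fin m) : embedAt m d i 1 = 1 := by
  rw [embedAt_eq]
  simp only [ite_self]
  exact tensorPow_one

lemma embedAt_commute {i j : Fin m} (hij : i ≠ j) (A B : Matrix (Fin d) (Fin d) ℂ) :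
    Commute (embedAt m d i A) (embedAt m d j B) := by
  show _ * _ = _ * _
  rw [embedAt_eq, embedAt_eq, tensorPow_mul, tensorPow_mul]
  refine congrArg (tensorPow m d) (funext fun l => ?_)
  by_cases hi : l = i
  · subst hi
    simp [hij, Ne.symm hij]
  · by_cases hj : l = j <;> simp [hi, hj, Ne.symm hij]

lemma embedAt_add (i : Fin m) (A B : Matrix (Fin d) (Fin d) ℂ) :
    embedAt m d i (A + B) = embedAt m d i A + embedAt m d i B := by
  ext x y
  simp [embedAt, add_mul]

lemma embedAt_zero (i : Fin m) : embedAt m d i (0 : Matrix (Fin d) (Fin d) ℂ) = 0 := by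
  ext x y
  simp [embedAt]

lemma embedAt_smul (i : Fin m) (c : ℂ) (A : Matrix (Fin d) (Fin d) ℂ) :
    embedAt m d i (c • A) = c • embedAt m d i A := by
  ext x y
  simp [embedAt, mul_assoc]

/-- `embedAt` as an algebra homomorphism. -/
noncomputable def embedHom (m d : ℕ) (i : Fin m) :
    Matrix (Fin d) (Fin d) ℂ →ₐ[ℂ] Matrix (Fin m → Fin d) (Fin m → Fin d) ℂ where
  toFun := embedAt m d i
  map_one' := embedAt_one i
  map_mul' A B := (embedAt_mul i A B).symm
  map_zero' := embedAt_zero i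
  map_add' := embedAt_add i
  commutes' r := by
    show embedAt m d i (algebraMap ℂ _ r) = algebraMap ℂ _ r
    rw [Algebra.algebraMap_eq_smul_one, Algebra.algebraMap_eq_smul_one, embedAt_smul,
      embedAt_one i]

lemma mexp_embedAt (i : Fin m) (M : Matrix (Fin d) (Fin d) ℂ) :
    mexp (embedAt m d i M) = embedAt m d i (mexp M) := by
  unfold mexp
  letI : SeminormedRing (Matrix (Fin d) (Fin d) ℂ) := Matrix.linftyOpSemiNormedRing
  letI : NormedRing (Matrix (Fin d) (Fin d) ℂ) := Matrix.linftyOpNormedRing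
  letI : NormedAlgebra ℂ (Matrix (Fin d) (Fin d) ℂ) := Matrix.linftyOpNormedAlgebra
  letI : SeminormedRing (Matrix (Fin m → Fin d) (Fin m → Fin d) ℂ) :=
    Matrix.linftyOpSemiNormedRing
  letI : NormedRing (Matrix (Fin m → Fin d) (Fin m → Fin d) ℂ) := Matrix.linftyOpNormedRing
  letI : NormedAlgebra ℂ (Matrix (Fin m → Fin d) (Fin m → Fin d) ℂ) :=
    Matrix.linftyOpNormedAlgebra
  letI : NormedAlgebra ℚ (Matrix (Fin d) (Fin d) ℂ) := .restrictScalars ℚ ℂ _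
  have hc : Continuous (embedHom m d i) :=
    LinearMap.continuous_of_finiteDimensional (embedHom m d i).toLinearMap
  exact (NormedSpace.map_exp (embedHom m d i) hc M).symm

end Helpers2
section Helpers3

variable {m d : ℕ}

lemma noncommProd_embed (A : Fin m → Matrix (Fin d) (Fin d) ℂ) (s : Finset (Fin m))
    (h : (s : Set (Fin m)).Pairwise (Function.onFun Commute fun i => embedAt m d i (A i))) :
    s.noncommProd (fun i => embedAt m d i (A i)) h
      = tensorPow m d (fun j => if j ∈ s then A j else 1) := by
  classical
  induction s using Finset.induction_on with
  | empty => simp [Finset.noncommProd_empty, tensorPow_one]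
  | @insert a s ha ih =>
    rw [Finset.noncommProd_insert_of_notMem _ _ _ _ ha, ih, embedAt_eq, tensorPow_mul]
    refine congrArg (tensorPow m d) (funext fun j => ?_)
    by_cases hj : j = a
    · subst hj
      simp [ha]
    · simp [hj, Finset.mem_insert]

lemma trace_tensorPow (f : Fin m → Matrix (Fin d) (Fin d) ℂ) :
    Matrix.trace (tensorPow m d f) = ∏ i, Matrix.trace (f i) := by
  symm
  simp only [Matrix.trace, Matrix.diag, tensorPow, Matrix.of_apply]
  rw [Finset.prod_univ_sum, Fintype.piFinset_univ]

lemma trace_embed_mul_tensorPow (i : Fin m) (A : Matrix (Fin d) (Fin d) ℂ)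
    (τ : Fin m → Matrix (Fin d) (Fin d) ℂ) (hτ : ∀ j, Matrix.trace (τ j) = 1) :
    Matrix.trace (embedAt m d i A * tensorPow m d τ) = Matrix.trace (A * τ i) := by
  rw [embedAt_eq, tensorPow_mul, trace_tensorPow]
  have : ∀ j, Matrix.trace ((if j = i then A else 1) * τ j)
      = if j = i then Matrix.trace (A * τ i) else 1 := by
    intro j
    by_cases hj : j = i
    · subst hj; simp
    · simp [hj, hτ j]
  rw [Finset.prod_congr rfl fun j _ => this j, Finset.prod_ite_eq' Finset.univ i
    (fun _ => Matrix.trace (A * τ i))]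
  simp

lemma mexp_sum_embed (M : Fin m → Matrix (Fin d) (Fin d) ℂ) :
    mexp (∑ i, embedAt m d i (M i)) = tensorPow m d (fun i => mexp (M i)) := by
  classical
  have hcomm : ((Finset.univ : Finset (Fin m)) : Set (Fin m)).Pairwise
      (Function.onFun Commute fun i => embedAt m d i (M i)) := by
    intro i _ j hj hij
    exact embedAt_commute hij (M i) (M j)
  rw [show mexp (∑ i, embedAt m d i (M i))
      = NormedSpace.exp (∑ i, embedAt m d i (M i)) from rfl,
    Matrix.exp_sum_of_commute Finset.univ _ hcomm]
  have : (fun i => NormedSpace.exp (embedAt m d i (M i)))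
      = fun i => embedAt m d i (mexp (M i)) := by
    funext i
    exact mexp_embedAt i (M i)
  refine (Finset.noncommProd_congr rfl (fun i _ => congrFun this i) _).trans ?_
  refine (noncommProd_embed (fun i => mexp (M i)) Finset.univ
    (fun i _ j _ hij => embedAt_commute hij _ _)).trans ?_
  simp [tensorPow]

end Helpers3
section Helpers4

variable {ι : Type*} [Fintype ι] [DecidableEq ι]

lemma psd_trace_nonneg {A : Matrix ι ι ℂ} (hA : A.PosSemidef) :
    0 ≤ Matrix.trace A := by
  rw [Matrix.trace]
  refine Finset.sum_nonneg fun i _ => ?_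
  have h := (Matrix.posSemidef_iff_dotProduct_mulVec.mp hA).2 (Pi.single i 1)
  simpa [dotProduct, Matrix.mulVec, Pi.single_apply, Finset.sum_ite_eq,
    Finset.sum_ite_eq'] using h

lemma psd_eq_zero_of_trace_eq_zero {A : Matrix ι ι ℂ} (hA : A.PosSemidef)
    (h : Matrix.trace A = 0) : A = 0 := by
  obtain ⟨B, rfl⟩ : ∃ B : Matrix ι ι ℂ, A = Bᴴ * B := by
    open scoped MatrixOrder Matrix.Norms.L2Operator in
    exact CStarAlgebra.nonneg_iff_eq_star_mul_self.mp hA.nonneg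
  suffices hB : B = 0 by simp [hB]
  have ht : Matrix.trace (Bᴴ * B) = ((∑ j, ∑ i, Complex.normSq (B i j) : ℝ) : ℂ) := by
    rw [Matrix.trace]
    push_cast
    refine Finset.sum_congr rfl fun j _ => ?_
    rw [Matrix.diag_apply, Matrix.mul_apply]
    refine Finset.sum_congr rfl fun i _ => ?_
    rw [Matrix.conjTranspose_apply]
    rw [Complex.star_def, Complex.normSq_eq_conj_mul_self]
  rw [ht] at h
  have h0 : (∑ j, ∑ i, Complex.normSq (B i j) : ℝ) = 0 := by exact_mod_cast h
  have hterm : ∀ j ∈ Finset.univ, ∀ i ∈ Finset.univ, Complex.normSq (B i j) = 0 := by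
    intro j _ i _
    have h1 : ∀ j ∈ (Finset.univ : Finset ι), 0 ≤ ∑ i, Complex.normSq (B i j) :=
      fun j _ => Finset.sum_nonneg fun i _ => Complex.normSq_nonneg _
    have h2 := (Finset.sum_eq_zero_iff_of_nonneg h1).mp h0 j (Finset.mem_univ j)
    exact (Finset.sum_eq_zero_iff_of_nonneg
      (fun i _ => Complex.normSq_nonneg _)).mp h2 i (Finset.mem_univ i)
  ext i j
  simpa using Complex.normSq_eq_zero.mp (hterm j (Finset.mem_univ j) i (Finset.mem_univ i))

lemma trace_mul_mexp_pos {τ H : Matrix ι ι ℂ} (hτ : τ.PosSemidef)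
    (hτ1 : Matrix.trace τ = 1) (hH : H.IsHermitian) :
    ∃ r : ℝ, 0 < r ∧ Matrix.trace (τ * mexp H) = (r : ℂ) := by
  set C := mexp ((1 / 2 : ℂ) • H) with hCdef
  have hherm : ((1 / 2 : ℂ) • H).IsHermitian := by
    unfold Matrix.IsHermitian
    rw [Matrix.conjTranspose_smul, hH.eq]
    norm_num
  have hC : C.IsHermitian := Matrix.IsHermitian.exp hherm
  have hCC : C * C = mexp H := by
    rw [hCdef, show mexp ((1/2 : ℂ) • H) = NormedSpace.exp ((1/2 : ℂ) • H) from rfl,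
      ← Matrix.exp_add_of_commute _ _ (Commute.refl _)]
    rw [show (1/2 : ℂ) • H + (1/2 : ℂ) • H = H by rw [← add_smul]; norm_num]
    rfl
  set D := mexp (-((1 / 2 : ℂ) • H)) with hDdef
  have hDC : D * C = 1 := by
    rw [hDdef, hCdef, show mexp (-((1/2:ℂ) • H)) = NormedSpace.exp (-((1/2:ℂ) • H)) from rfl,
      show mexp ((1/2:ℂ) • H) = NormedSpace.exp ((1/2:ℂ) • H) from rfl,
      ← Matrix.exp_add_of_commute _ _ ((Commute.refl ((1/2:ℂ) • H)).neg_left), neg_add_cancel]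
    exact NormedSpace.exp_zero
  have hCD : C * D = 1 := by
    rw [hDdef, hCdef, show mexp (-((1/2:ℂ) • H)) = NormedSpace.exp (-((1/2:ℂ) • H)) from rfl,
      show mexp ((1/2:ℂ) • H) = NormedSpace.exp ((1/2:ℂ) • H) from rfl,
      ← Matrix.exp_add_of_commute _ _ ((Commute.refl ((1/2:ℂ) • H)).neg_right), add_neg_cancel]
    exact NormedSpace.exp_zero
  have hP : (C * τ * C).PosSemidef := by
    have := hτ.mul_mul_conjTranspose_same C
    rwa [hC.eq] at this
  have htr : Matrix.trace (τ * mexp H) = Matrix.trace (C * τ * C) := by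
    rw [← hCC, ← mul_assoc, Matrix.trace_mul_comm, ← mul_assoc]
  have hnn : 0 ≤ Matrix.trace (C * τ * C) := psd_trace_nonneg hP
  rw [Complex.le_def] at hnn
  refine ⟨(Matrix.trace (C * τ * C)).re, ?_, ?_⟩
  · rcases lt_or_eq_of_le hnn.1 with hlt | heq
    · simpa using hlt
    · exfalso
      have hz : Matrix.trace (C * τ * C) = 0 := by
        apply Complex.ext <;> simp [← heq, ← hnn.2]
      have hzero : C * τ * C = 0 := psd_eq_zero_of_trace_eq_zero hP hz
      have : τ = 0 := by
        have h1 : D * (C * τ * C) * D = 0 := by rw [hzero]; simp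
        rw [← mul_assoc, ← mul_assoc, hDC, one_mul, mul_assoc, hCD, mul_one] at h1
        exact h1
      rw [this] at hτ1
      simp at hτ1
  · rw [htr]
    apply Complex.ext <;> simp [← hnn.2]

end Helpers4
section Helpers5

variable {m d : ℕ}

lemma embedAt_sub (i : Fin m) (A B : Matrix (Fin d) (Fin d) ℂ) :
    embedAt m d i (A - B) = embedAt m d i A - embedAt m d i B := by
  ext x y
  simp [embedAt, sub_mul]

lemma herm_trace_real {ι : Type*} [Fintype ι] {A B : Matrix ι ι ℂ}
    (hA : A.IsHermitian) (hB : B.IsHermitian) :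
    Matrix.trace (A * B) = ((Matrix.trace (A * B)).re : ℂ) := by
  have h : (starRingEnd ℂ) (Matrix.trace (A * B)) = Matrix.trace (A * B) := by
    have h1 : (starRingEnd ℂ) (Matrix.trace (A * B)) = Matrix.trace ((A * B)ᴴ) := by
      rw [Matrix.trace_conjTranspose]; rfl
    rw [h1, Matrix.conjTranspose_mul, hA.eq, hB.eq, Matrix.trace_mul_comm]
  exact (Complex.conj_eq_iff_re.mp h).symm

end Helpers5


/-- **Tensorization of quantum sub-gaussianity.** If each local `L̃ᵢ` is
`αᵢ`-sub-gaussian w.r.t. `τᵢ`, then `L = (1/m) Σᵢ Lᵢ` is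
`(1/m)·√(Σᵢ αᵢ²)`-sub-gaussian w.r.t. `τ₁ ⊗ ⋯ ⊗ τ_m`. -/
theorem subgaussian_tensorization {m d : ℕ} (hm : 0 < m)
    (Lt : Fin m → Matrix (Fin d) (Fin d) ℂ) (hLt : ∀ i, (Lt i).IsHermitian)
    (τ : Fin m → Matrix (Fin d) (Fin d) ℂ) (hτ : ∀ i, IsDensity (τ i))
    (α : Fin m → ℝ) (hα : ∀ i, 0 ≤ α i)
    (hsg : ∀ i, IsSubGaussianObs (Lt i) (τ i) (α i)) :
    IsSubGaussianObs ((1 / (m : ℂ)) • ∑ i, embedAt m d i (Lt i)) (tensorPow m d τ)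
      ((1 / (m : ℝ)) * Real.sqrt (∑ i, (α i) ^ 2)) := by
  intro l
  have hm0 : (m : ℝ) ≠ 0 := Nat.cast_ne_zero.mpr hm.ne'
  have hm0' : (m : ℂ) ≠ 0 := Nat.cast_ne_zero.mpr hm.ne'
  set σ := tensorPow m d τ with hσdef
  set L := (1 / (m : ℂ)) • ∑ i, embedAt m d i (Lt i) with hLdef
  set c : Fin m → ℂ := fun i => Matrix.trace (Lt i * τ i) with hcdef
  have hτtr : ∀ j, Matrix.trace (τ j) = 1 := fun j => (hτ j).2
  -- the trace of L σ
  have hc : Matrix.trace (L * σ) = (1 / (m : ℂ)) * ∑ i, c i := by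
    rw [hLdef, Matrix.smul_mul, Matrix.trace_smul, smul_eq_mul]
    congr 1
    rw [Finset.sum_mul, Matrix.trace_sum]
    exact Finset.sum_congr rfl fun i _ => trace_embed_mul_tensorPow i (Lt i) τ hτtr
  -- the local shifted observables
  set M : Fin m → Matrix (Fin d) (Fin d) ℂ :=
    fun i => ((l / m : ℝ) : ℂ) • (Lt i - Matrix.trace (Lt i * τ i) • 1) with hMdef
  have hkey : (l : ℂ) • (L - Matrix.trace (L * σ) • (1 : Matrix (Fin m → Fin d) (Fin m → Fin d) ℂ))
      = ∑ i, embedAt m d i (M i) := by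
    have h1 : ∀ i, embedAt m d i (M i)
        = ((l / m : ℝ) : ℂ) • (embedAt m d i (Lt i) - c i • 1) := by
      intro i
      rw [hMdef, embedAt_smul, embedAt_sub, embedAt_smul, embedAt_one]
    rw [Finset.sum_congr rfl fun i _ => h1 i, ← Finset.smul_sum, Finset.sum_sub_distrib,
      ← Finset.sum_smul, hc, hLdef]
    have hml : ((l / m : ℝ) : ℂ) = (l : ℂ) * (1 / (m : ℂ)) := by push_cast; ring
    rw [hml, smul_sub, smul_sub, smul_smul, smul_smul, smul_smul]
    simp [mul_assoc]
  -- factorize the trace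
  have hfact : Matrix.trace (σ * mexp ((l : ℂ) • (L - Matrix.trace (L * σ) • 1)))
      = ∏ i, Matrix.trace (τ i * mexp (M i)) := by
    rw [hkey, mexp_sum_embed, hσdef, tensorPow_mul, trace_tensorPow]
  -- each local factor is a positive real
  have hpos : ∀ i, ∃ r : ℝ, 0 < r ∧ Matrix.trace (τ i * mexp (M i)) = (r : ℂ) := by
    intro i
    have hci := herm_trace_real (hLt i) (hτ i).1.isHermitian
    have hMherm : (M i).IsHermitian := by
      have h2 : ((Matrix.trace (Lt i * τ i)) • (1 : Matrix (Fin d) (Fin d) ℂ)).IsHermitian := by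
        rw [hci]
        unfold Matrix.IsHermitian
        rw [Matrix.conjTranspose_smul, Matrix.conjTranspose_one]
        congr 1
        simp
      have h1 := (hLt i).sub h2
      have hMi : M i = ((l / m : ℝ) : ℂ) • (Lt i - Matrix.trace (Lt i * τ i) • 1) := rfl
      rw [hMi]
      unfold Matrix.IsHermitian
      rw [Matrix.conjTranspose_smul, h1.eq]
      congr 1
      simp
    exact trace_mul_mexp_pos (hτ i).1 (hτ i).2 hMherm
  choose r hr hreq using hpos
  have htot : Matrix.trace (σ * mexp ((l : ℂ) • (L - Matrix.trace (L * σ) • 1)))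
      = ((∏ i, r i : ℝ) : ℂ) := by
    rw [hfact]
    push_cast
    exact Finset.prod_congr rfl fun i _ => hreq i
  rw [htot, Complex.ofReal_re, Real.log_prod (fun i _ => (hr i).ne')]
  -- use the local sub-gaussianity
  have hbound : ∀ i, Real.log (r i) ≤ α i ^ 2 * (l / m) ^ 2 / 2 := by
    intro i
    have := hsg i (l / m)
    rwa [show ((l / m : ℝ) : ℂ) • (Lt i - Matrix.trace (Lt i * τ i) • 1) = M i from rfl,
      hreq i, Complex.ofReal_re] at this
  calc ∑ i, Real.log (r i) ≤ ∑ i, α i ^ 2 * (l / m) ^ 2 / 2 :=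
        Finset.sum_le_sum fun i _ => hbound i
    _ = (1 / (m : ℝ) * Real.sqrt (∑ i, α i ^ 2)) ^ 2 * l ^ 2 / 2 := by
        rw [mul_pow, Real.sq_sqrt (Finset.sum_nonneg fun i _ => sq_nonneg (α i))]
        rw [← Finset.sum_div, ← Finset.sum_mul]
        field_simp
end
end

section
/- If a random variable X takes values almost surely in the interval [a, b], then X is ((b − a)/2)-sub-gaussian, i.e. log E[exp(λ(X − E[X]))] ≤ (b − a)²λ²/8 for all real λ. -/
open MeasureTheory ProbabilityTheory

noncomputable section

/-- A real random variable `X` on `(Ω, μ)` is `β`-sub-gaussian: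
`log E[exp(λ(X − E[X]))] ≤ β²λ²/2` for all real `λ`. -/
def SubGaussRV {Ω : Type*} [MeasurableSpace Ω] (μ : Measure Ω) (X : Ω → ℝ) (β : ℝ) : Prop :=
  ∀ l : ℝ, Real.log (∫ ω, Real.exp (l * (X ω - ∫ ω', X ω' ∂μ)) ∂μ) ≤ β ^ 2 * l ^ 2 / 2

lemma key_ineq (θ : ℝ) (hθ0 : 0 ≤ θ) (hθ1 : θ ≤ 1) (h : ℝ) :
    Real.log (1 - θ + θ * Real.exp h) ≤ θ * h + h ^ 2 / 8 := by
  have hD : ∀ x : ℝ, 0 < 1 - θ + θ * Real.exp x := by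
    intro x
    rcases lt_or_eq_of_le hθ1 with h1 | h1
    · nlinarith [Real.exp_pos x]
    · rw [h1]; simpa using Real.exp_pos x
  set g : ℝ → ℝ := fun x => θ * x + x ^ 2 / 8 - Real.log (1 - θ + θ * Real.exp x) with hgdef
  set g1 : ℝ → ℝ := fun x => θ + x / 4 - θ * Real.exp x / (1 - θ + θ * Real.exp x) with hg1def
  have hDex : ∀ x : ℝ, HasDerivAt (fun y => 1 - θ + θ * Real.exp y) (θ * Real.exp x) x := by
    intro x
    simpa using ((Real.hasDerivAt_exp x).const_mul θ).const_add (1 - θ)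
  have hg : ∀ x, HasDerivAt g (g1 x) x := by
    intro x
    have hlog := (hDex x).log (hD x).ne'
    have hlin : HasDerivAt (fun y : ℝ => θ * y + y ^ 2 / 8) (θ + x / 4) x := by
      have := ((hasDerivAt_id x).const_mul θ).add ((hasDerivAt_pow 2 x).div_const 8)
      exact this.congr_deriv (by ring)
    exact hlin.sub hlog
  have hg1 : ∀ x, HasDerivAt g1
      (1 / 4 - (θ * Real.exp x * (1 - θ + θ * Real.exp x) - θ * Real.exp x * (θ * Real.exp x))
        / (1 - θ + θ * Real.exp x) ^ 2) x := by
    intro x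
    have hquot := (((Real.hasDerivAt_exp x).const_mul θ)).div (hDex x) (hD x).ne'
    have hlin : HasDerivAt (fun y : ℝ => θ + y / 4) (1 / 4 : ℝ) x := by
      simpa using ((hasDerivAt_id x).div_const 4).const_add θ
    exact hlin.sub hquot
  have hg1nonneg : ∀ x : ℝ, 0 ≤ 1 / 4 -
      (θ * Real.exp x * (1 - θ + θ * Real.exp x) - θ * Real.exp x * (θ * Real.exp x))
        / (1 - θ + θ * Real.exp x) ^ 2 := by
    intro x
    rw [sub_nonneg, div_le_iff₀ (pow_pos (hD x) 2)]
    nlinarith [sq_nonneg (θ * Real.exp x - (1 - θ)), Real.exp_pos x]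
  have hg1mono : Monotone g1 :=
    monotone_of_deriv_nonneg (fun x => (hg1 x).differentiableAt)
      (fun x => by rw [(hg1 x).deriv]; exact hg1nonneg x)
  have hg1zero : g1 0 = 0 := by simp [hg1def]
  have hgdiff : Differentiable ℝ g := fun x => (hg x).differentiableAt
  have hgderiv : ∀ x, deriv g x = g1 x := fun x => (hg x).deriv
  have hgzero : g 0 = 0 := by simp [hgdef]
  have hgnonneg : 0 ≤ g h := by
    rcases le_total 0 h with hh | hh
    · have hmono : MonotoneOn g (Set.Ici 0) := by
        apply monotoneOn_of_deriv_nonneg (convex_Ici 0) hgdiff.continuous.continuousOn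
          (hgdiff.differentiableOn)
        intro x hx
        rw [hgderiv x, ← hg1zero]
        exact hg1mono (le_of_lt (by simpa using hx))
      have := hmono (Set.self_mem_Ici) (by exact hh) hh
      linarith [hgzero]
    · have hanti : AntitoneOn g (Set.Iic 0) := by
        apply antitoneOn_of_deriv_nonpos (convex_Iic 0) hgdiff.continuous.continuousOn
          (hgdiff.differentiableOn)
        intro x hx
        rw [hgderiv x, ← hg1zero]
        exact hg1mono (le_of_lt (by simpa using hx))
      have := hanti (by exact hh) Set.self_mem_Iic hh
      linarith [hgzero]
  have heq : g h = θ * h + h ^ 2 / 8 - Real.log (1 - θ + θ * Real.exp h) := rfl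
  rw [heq] at hgnonneg
  linarith

/-- **Hoeffding's lemma.** If `X ∈ [a, b]` almost surely, then `X` is
`((b−a)/2)`-sub-gaussian: `log E[exp(λ(X − E[X]))] ≤ (b−a)²λ²/8` for all `λ`. -/
theorem hoeffding_lemma {Ω : Type*} [MeasurableSpace Ω]
    (μ : Measure Ω) [IsProbabilityMeasure μ]
    (X : Ω → ℝ) (hX : Measurable X) (hint : Integrable X μ)
    (a b : ℝ) (hab : ∀ᵐ ω ∂μ, X ω ∈ Set.Icc a b) (l : ℝ) :
    Real.log (∫ ω, Real.exp (l * (X ω - ∫ ω', X ω' ∂μ)) ∂μ)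
      ≤ (b - a) ^ 2 * l ^ 2 / 8 := by
  have hμ : μ ≠ 0 := IsProbabilityMeasure.ne_zero μ
  have : (ae μ).NeBot := ae_neBot.mpr hμ
  obtain ⟨ω₀, hω₀⟩ := hab.exists
  have hab' : a ≤ b := hω₀.1.trans hω₀.2
  set m := ∫ ω', X ω' ∂μ with hm
  -- m ∈ [a, b]
  have ham : a ≤ m := by
    have := integral_mono_ae (integrable_const a) hint
      (hab.mono fun ω hω => hω.1)
    simpa using this
  have hmb : m ≤ b := by
    have := integral_mono_ae hint (integrable_const b)
      (hab.mono fun ω hω => hω.2)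
    simpa using this
  -- integrability of the exponential
  have hmeas : AEStronglyMeasurable (fun ω => Real.exp (l * (X ω - m))) μ :=
    (Real.measurable_exp.comp ((measurable_const.mul (hX.sub measurable_const)))).aestronglyMeasurable
  have hbound : ∀ᵐ ω ∂μ, ‖Real.exp (l * (X ω - m))‖ ≤
      Real.exp (l * (a - m)) + Real.exp (l * (b - m)) := by
    filter_upwards [hab] with ω hω
    rw [Real.norm_eq_abs, abs_of_pos (Real.exp_pos _)]
    rcases le_total 0 l with hl | hl
    · have : l * (X ω - m) ≤ l * (b - m) := by nlinarith [hω.2]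
      calc Real.exp (l * (X ω - m)) ≤ Real.exp (l * (b - m)) := Real.exp_le_exp.mpr this
        _ ≤ _ := by linarith [Real.exp_pos (l * (a - m))]
    · have : l * (X ω - m) ≤ l * (a - m) := by nlinarith [hω.1]
      calc Real.exp (l * (X ω - m)) ≤ Real.exp (l * (a - m)) := Real.exp_le_exp.mpr this
        _ ≤ _ := by linarith [Real.exp_pos (l * (b - m))]
  have hintexp : Integrable (fun ω => Real.exp (l * (X ω - m))) μ :=
    (integrable_const _).mono' hmeas hbound
  have hpos : 0 < ∫ ω, Real.exp (l * (X ω - m)) ∂μ := integral_exp_pos hintexp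
  rcases eq_or_lt_of_le hab' with hq | hq
  · -- a = b : X is a.s. constant
    have hXa : ∀ᵐ ω ∂μ, X ω = a := by
      filter_upwards [hab] with ω hω
      exact le_antisymm (hq ▸ hω.2) hω.1
    have hma : m = a := by
      rw [hm, integral_congr_ae hXa]
      simp
    have : (∫ ω, Real.exp (l * (X ω - m)) ∂μ) = 1 := by
      rw [integral_congr_ae (g := fun _ => (1:ℝ)) ?_]
      · simp
      · filter_upwards [hXa] with ω hω
        rw [hω, hma]; simp
    rw [this, Real.log_one]
    positivity
  · -- a < b : the main case
    set θ : ℝ := (m - a) / (b - a) with hθ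
    have hba : 0 < b - a := by linarith
    have hθ0 : 0 ≤ θ := div_nonneg (by linarith) hba.le
    have hθ1 : θ ≤ 1 := by
      rw [div_le_one hba]; linarith
    -- pointwise convexity bound
    have hconv : ∀ᵐ ω ∂μ, Real.exp (l * (X ω - m)) ≤
        (b - X ω) / (b - a) * Real.exp (l * (a - m))
          + (X ω - a) / (b - a) * Real.exp (l * (b - m)) := by
      filter_upwards [hab] with ω hω
      have hp : (0:ℝ) ≤ (b - X ω) / (b - a) := div_nonneg (by linarith [hω.2]) hba.le
      have hq' : (0:ℝ) ≤ (X ω - a) / (b - a) := div_nonneg (by linarith [hω.1]) hba.le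
      have hsum : (b - X ω) / (b - a) + (X ω - a) / (b - a) = 1 := by
        field_simp
        ring
      have := convexOn_exp.2 (Set.mem_univ (l * (a - m))) (Set.mem_univ (l * (b - m)))
        hp hq' hsum
      simp only [smul_eq_mul] at this
      refine (le_of_eq ?_).trans this
      congr 1
      rw [div_mul_eq_mul_div, div_mul_eq_mul_div, ← add_div, eq_div_iff hba.ne']
      ring
    -- integrate
    have hrint : Integrable (fun ω => (b - X ω) / (b - a) * Real.exp (l * (a - m))
        + (X ω - a) / (b - a) * Real.exp (l * (b - m))) μ := by
      apply Integrable.add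
      · exact (((integrable_const b).sub hint).div_const _).mul_const _
      · exact ((hint.sub (integrable_const a)).div_const _).mul_const _
    have h1 : Integrable (fun ω => (b - X ω) / (b - a) * Real.exp (l * (a - m))) μ := by
      apply Integrable.mul_const
      apply Integrable.div_const
      exact (integrable_const b).sub hint
    have h2 : Integrable (fun ω => (X ω - a) / (b - a) * Real.exp (l * (b - m))) μ := by
      apply Integrable.mul_const
      apply Integrable.div_const
      exact hint.sub (integrable_const a)
    have h1θ : 1 - θ = (b - m) / (b - a) := by
      rw [hθ]; field_simp; ring
    have hIle : (∫ ω, Real.exp (l * (X ω - m)) ∂μ) ≤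
        (1 - θ) * Real.exp (l * (a - m)) + θ * Real.exp (l * (b - m)) := by
      calc (∫ ω, Real.exp (l * (X ω - m)) ∂μ)
          ≤ ∫ ω, ((b - X ω) / (b - a) * Real.exp (l * (a - m))
              + (X ω - a) / (b - a) * Real.exp (l * (b - m))) ∂μ :=
            integral_mono_ae hintexp hrint hconv
        _ = (1 - θ) * Real.exp (l * (a - m)) + θ * Real.exp (l * (b - m)) := by
            rw [integral_add h1 h2, integral_mul_const, integral_mul_const,
              integral_div, integral_div,
              integral_sub (integrable_const b) hint, integral_sub hint (integrable_const a)]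
            simp only [integral_const, probReal_univ, ENNReal.toReal_one, smul_eq_mul, one_mul]
            rw [h1θ, hθ, ← hm]
    have hfac : (1 - θ) * Real.exp (l * (a - m)) + θ * Real.exp (l * (b - m))
        = Real.exp (l * (a - m)) * (1 - θ + θ * Real.exp (l * (b - a))) := by
      have hexp : Real.exp (l * (b - m)) = Real.exp (l * (a - m)) * Real.exp (l * (b - a)) := by
        rw [← Real.exp_add]; congr 1; ring
      rw [hexp]; ring
    calc Real.log (∫ ω, Real.exp (l * (X ω - m)) ∂μ)
        ≤ Real.log (Real.exp (l * (a - m)) * (1 - θ + θ * Real.exp (l * (b - a)))) := by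
          apply Real.log_le_log hpos
          rw [← hfac]; exact hIle
      _ = l * (a - m) + Real.log (1 - θ + θ * Real.exp (l * (b - a))) := by
          rw [Real.log_mul (Real.exp_ne_zero _) ?_, Real.log_exp]
          have hD : 0 < 1 - θ + θ * Real.exp (l * (b - a)) := by
            rcases eq_or_lt_of_le hθ1 with h1 | h1
            · rw [h1]; simpa using Real.exp_pos _
            · nlinarith [Real.exp_pos (l * (b - a))]
          exact hD.ne'
      _ ≤ l * (a - m) + (θ * (l * (b - a)) + (l * (b - a)) ^ 2 / 8) := by
          linarith [key_ineq θ hθ0 hθ1 (l * (b - a))]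
      _ = (b - a) ^ 2 * l ^ 2 / 8 := by
          have : θ * (l * (b - a)) = l * (m - a) := by
            rw [hθ]; field_simp
          rw [this]; ring
end
end

section
/- Let ψ : ℝ → ℝ be convex with ψ(0) = 0 and ψ'(0) = 0 and suppose a real number g satisfies g ≤ inf_{λ>0} (c + ψ(λ))/λ for some c ≥ 0. Then g ≤ ψ*⁻¹(c), where ψ*(t) = sup_{λ≥0}(λt − ψ(λ)) and ψ*⁻¹(s) = inf{t ≥ 0 : ψ*(t) > s}. -/
noncomputable section

/-- Fenchel–Legendre dual over nonnegative arguments: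
`ψ*(t) = sup_{λ≥0}(λt − ψ(λ))`, valued in `EReal`. -/
noncomputable def legendreNN (ψ : ℝ → ℝ) (t : ℝ) : EReal :=
  ⨆ (l : ℝ) (_ : 0 ≤ l), ((l * t - ψ l : ℝ) : EReal)

/-- Generalized inverse `ψ*⁻¹(s) = inf{t ≥ 0 : ψ*(t) > s}`. -/
noncomputable def legendreNNInv (ψ : ℝ → ℝ) (s : ℝ) : ℝ :=
  sInf {t : ℝ | 0 ≤ t ∧ (s : EReal) < legendreNN ψ t}

/-- **Duality between infimum representations and generalized inverse Legendre
transforms** (Boucheron–Lugosi–Massart, Lemma 2.4). If `ψ` is convex with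
`ψ(0) = ψ'(0) = 0`, `c ≥ 0`, and `g ≤ inf_{λ>0} (c + ψ(λ))/λ`, then
`g ≤ ψ*⁻¹(c)`. -/
theorem le_legendre_inverse_of_le_inf (ψ : ℝ → ℝ)
    (hconv : ConvexOn ℝ Set.univ ψ) (hψ0 : ψ 0 = 0) (hψ0' : HasDerivAt ψ 0 0)
    (c : ℝ) (hc : 0 ≤ c) (g : ℝ)
    (hg : ∀ l : ℝ, 0 < l → g ≤ (c + ψ l) / l) :
    g ≤ legendreNNInv ψ c := by
  apply le_csInf
  · -- nonempty: take t = max 0 (c + ψ 1) + 1 witnessed by l = 1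
    refine ⟨max 0 (c + ψ 1) + 1, by positivity, ?_⟩
    have h1 : (c : EReal) < ((1 * (max 0 (c + ψ 1) + 1) - ψ 1 : ℝ) : EReal) := by
      rw [EReal.coe_lt_coe_iff]
      have : c + ψ 1 ≤ max 0 (c + ψ 1) := le_max_right _ _
      nlinarith
    calc (c : EReal) < _ := h1
      _ ≤ legendreNN ψ (max 0 (c + ψ 1) + 1) := by
          rw [legendreNN]
          exact le_iSup₂ (f := fun l (_ : (0:ℝ) ≤ l) => ((l * (max 0 (c + ψ 1) + 1) - ψ l : ℝ) : EReal)) 1 zero_le_one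
  · rintro t ⟨ht0, hlt⟩
    rw [legendreNN, lt_iSup_iff] at hlt
    obtain ⟨l, hl⟩ := hlt
    rw [lt_iSup_iff] at hl
    obtain ⟨hl0, hcl⟩ := hl
    rw [EReal.coe_lt_coe_iff] at hcl
    have hlpos : 0 < l := by
      rcases hl0.lt_or_eq with h | h
      · exact h
      · exfalso; rw [← h, zero_mul, hψ0] at hcl; linarith
    have : (c + ψ l) / l < t := by
      rw [div_lt_iff₀ hlpos]; nlinarith
    exact le_of_lt (lt_of_le_of_lt (hg l hlpos) this)
end
end

section
/- Let ρ(x), indexed by a finite set X with probability weights p(x), be bipartite density matrices, and let ρ̄ = Σ_x p(x) ρ(x). Then the average bipartite quantum mutual information satisfies Σ_x p(x)·I(A;B)_{ρ(x)} ≤ I(A;B)_{ρ̄} + χ({p(x), ρ(x)}_{x∈X}), where χ is the Holevo information of the ensemble. -/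
open Matrix Kronecker ComplexOrder

noncomputable section

/-- Quantum mutual information `I(A;B)_ρ = H(ρ_A) + H(ρ_B) − H(ρ_{AB})`. -/
noncomputable def qmi {α β : Type*} [Fintype α] [Fintype β]
    [DecidableEq α] [DecidableEq β] (ρ : Matrix (α × β) (α × β) ℂ) : ℝ :=
  vnEntropy (ptraceSnd ρ) + vnEntropy (ptraceFst ρ) - vnEntropy ρ
namespace AvgQMI
variable {ι : Type*} [Fintype ι] [DecidableEq ι] {X : Type*} [Fintype X]

lemma sum_mulVec' (A : X → Matrix ι ι ℂ) (v : ι → ℂ) :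
    (∑ x, A x).mulVec v = ∑ x, (A x).mulVec v := by
  ext i
  simp only [Matrix.mulVec, dotProduct, Matrix.sum_apply, Finset.sum_apply,
    Finset.sum_mul]
  rw [Finset.sum_comm]

lemma dotProduct_sum' (u : ι → ℂ) (w : X → ι → ℂ) :
    dotProduct u (∑ x, w x) = ∑ x, dotProduct u (w x) := by
  simp only [dotProduct, Finset.sum_apply, Finset.mul_sum]
  rw [Finset.sum_comm]

end AvgQMI
namespace AvgQMI

variable {ι : Type*} [Fintype ι] [DecidableEq ι]

lemma matLog_eq {ρ : Matrix ι ι ℂ} (hρ : ρ.IsHermitian) :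
    matLog ρ = (hρ.eigenvectorUnitary : Matrix ι ι ℂ) *
      Matrix.diagonal (fun i => (Real.log (hρ.eigenvalues i) : ℂ)) *
      (star (hρ.eigenvectorUnitary : Matrix ι ι ℂ)) := dif_pos hρ

lemma trace_unitary_conj {U Y : Matrix ι ι ℂ} (hU : star U * U = 1) :
    Matrix.trace (U * Y * star U) = Matrix.trace Y := by
  rw [Matrix.trace_mul_comm, ← Matrix.mul_assoc, hU, Matrix.one_mul]

lemma trace_diag_conj (d e : ι → ℂ) (M : Matrix ι ι ℂ) :
    Matrix.trace (Matrix.diagonal d * M * Matrix.diagonal e * Mᴴ) =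
      ∑ i, ∑ j, d i * e j * (Complex.normSq (M i j) : ℂ) := by
  simp only [Matrix.trace, Matrix.diag_apply, Matrix.mul_apply, Matrix.diagonal_apply,
    Matrix.conjTranspose_apply, Finset.sum_mul, Finset.mul_sum, ite_mul, zero_mul,
    mul_ite, mul_zero]
  simp only [Finset.sum_ite_eq, Finset.sum_ite_eq', Finset.mem_univ, if_true]
  refine Finset.sum_congr rfl fun i _ => Finset.sum_congr rfl fun j _ => ?_
  rw [Complex.normSq_eq_conj_mul_self]
  simp only [Complex.star_def]
  ring

lemma sum_eigenvalues_eq {ρ : Matrix ι ι ℂ} (hρ : ρ.IsHermitian) :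
    Matrix.trace ρ = ∑ i, (hρ.eigenvalues i : ℂ) := by
  conv_lhs => rw [hρ.spectral_theorem, Unitary.conjStarAlgAut_apply]
  rw [trace_unitary_conj (Matrix.mem_unitaryGroup_iff'.mp hρ.eigenvectorUnitary.2),
    Matrix.trace_diagonal]
  simp

lemma trace_mul_matLog {ρ σ : Matrix ι ι ℂ} (hρ : ρ.PosSemidef) (hσ : σ.PosSemidef) :
    Matrix.trace (ρ * matLog σ) =
      ∑ i, ∑ j, (hρ.1.eigenvalues i : ℂ) * (Real.log (hσ.1.eigenvalues j) : ℂ) *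
        (Complex.normSq ((star (hρ.1.eigenvectorUnitary : Matrix ι ι ℂ) *
          (hσ.1.eigenvectorUnitary : Matrix ι ι ℂ)) i j) : ℂ) := by
  set U := (hρ.1.eigenvectorUnitary : Matrix ι ι ℂ) with hUdef
  set V := (hσ.1.eigenvectorUnitary : Matrix ι ι ℂ) with hVdef
  have hUU : star U * U = 1 := Matrix.mem_unitaryGroup_iff'.mp hρ.1.eigenvectorUnitary.2
  have hUU' : U * star U = 1 := Matrix.mem_unitaryGroup_iff.mp hρ.1.eigenvectorUnitary.2
  set M := star U * V with hMdef
  have hMH : Mᴴ = star V * U := by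
    simp [hMdef, Matrix.star_eq_conjTranspose, Matrix.conjTranspose_mul]
  have key : ρ * matLog σ =
      U * (Matrix.diagonal ((fun i => (hρ.1.eigenvalues i : ℂ))) * M *
        Matrix.diagonal (fun j => (Real.log (hσ.1.eigenvalues j) : ℂ)) * Mᴴ) * star U := by
    conv_lhs => rw [hρ.1.spectral_theorem, Unitary.conjStarAlgAut_apply, matLog_eq hσ.1]
    rw [hMH, hMdef]
    simp only [Function.comp_def, Matrix.mul_assoc, hUU', Matrix.mul_one]
    rfl
  rw [key, trace_unitary_conj hUU, trace_diag_conj]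

end AvgQMI
namespace AvgQMI

variable {ι : Type*} [Fintype ι] [DecidableEq ι]

lemma supp_eigen {ρ σ : Matrix ι ι ℂ} (hρ : ρ.PosSemidef) (hσ : σ.PosSemidef)
    (hsupp : SuppLE ρ σ) (i j : ι) (hμ : hσ.1.eigenvalues j = 0) :
    hρ.1.eigenvalues i = 0 ∨
      ((star (hρ.1.eigenvectorUnitary : Matrix ι ι ℂ) *
        (hσ.1.eigenvectorUnitary : Matrix ι ι ℂ)) i j) = 0 := by
  set U := (hρ.1.eigenvectorUnitary : Matrix ι ι ℂ) with hUdef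
  have hUU : star U * U = 1 := Matrix.mem_unitaryGroup_iff'.mp hρ.1.eigenvectorUnitary.2
  set v : ι → ℂ := ⇑(hσ.1.eigenvectorBasis j) with hvdef
  have hv0 : σ.mulVec v = 0 := by
    rw [hvdef, hσ.1.mulVec_eigenvectorBasis, hμ]
    simp
  have h2 : ρ.mulVec v = 0 := hsupp v hv0
  have h2' : (U * (Matrix.diagonal (RCLike.ofReal ∘ hρ.1.eigenvalues) * star U)).mulVec v
      = 0 := by
    rw [← Matrix.mul_assoc, show U * Matrix.diagonal (RCLike.ofReal ∘ hρ.1.eigenvalues) * star U = ρ from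
      (by conv_rhs => rw [hρ.1.spectral_theorem, Unitary.conjStarAlgAut_apply])]; exact h2
  have h3 : (Matrix.diagonal (RCLike.ofReal ∘ hρ.1.eigenvalues) * star U).mulVec v = 0 := by
    have h5 := congrArg (fun w => (star U).mulVec w) h2'
    simp only [Matrix.mulVec_zero, Matrix.mulVec_mulVec] at h5
    rwa [← Matrix.mul_assoc, hUU, Matrix.one_mul] at h5
  have h4 : (RCLike.ofReal (hρ.1.eigenvalues i) : ℂ) * ((star U).mulVec v i) = 0 := by
    rw [← Matrix.mulVec_mulVec] at h3
    have h7 := congrFun h3 i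
    simpa [Matrix.mulVec, dotProduct, Matrix.diagonal_apply, ite_mul, zero_mul,
      Finset.sum_ite_eq, Function.comp] using h7
  rcases mul_eq_zero.mp h4 with h | h
  · left; exact RCLike.ofReal_eq_zero.mp h
  · right
    rw [show (star U * (hσ.1.eigenvectorUnitary : Matrix ι ι ℂ)) i j
        = (star U).mulVec v i by
      simp [Matrix.mul_apply, Matrix.mulVec, dotProduct, hvdef]]
    exact h

end AvgQMI
namespace AvgQMI

variable {ι : Type*} [Fintype ι] [DecidableEq ι]

lemma klein {ρ σ : Matrix ι ι ℂ} (hρ : IsDensity ρ) (hσ : IsDensity σ)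
    (hsupp : SuppLE ρ σ) :
    (Matrix.trace (ρ * matLog σ)).re ≤ (Matrix.trace (ρ * matLog ρ)).re := by
  obtain ⟨hρp, hρt⟩ := hρ
  obtain ⟨hσp, hσt⟩ := hσ
  set lam := hρp.1.eigenvalues with hlamdef
  set mu := hσp.1.eigenvalues with hmudef
  set U := (hρp.1.eigenvectorUnitary : Matrix ι ι ℂ) with hUdef
  set V := (hσp.1.eigenvectorUnitary : Matrix ι ι ℂ) with hVdef
  have hUU : star U * U = 1 := Matrix.mem_unitaryGroup_iff'.mp hρp.1.eigenvectorUnitary.2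
  have hVV' : V * star V = 1 := Matrix.mem_unitaryGroup_iff.mp hσp.1.eigenvectorUnitary.2
  set M := star U * V with hMdef
  set n : ι → ι → ℝ := fun i j => Complex.normSq (M i j) with hndef
  have hMH : Mᴴ = star V * U := by
    simp [hMdef, Matrix.star_eq_conjTranspose, Matrix.conjTranspose_mul]
  have hMM : M * Mᴴ = 1 := by
    rw [hMH, hMdef]
    calc star U * V * (star V * U) = star U * (V * star V) * U := by
          simp only [Matrix.mul_assoc]
      _ = 1 := by rw [hVV']; simpa [Matrix.mul_assoc] using hUU
  have hMM' : Mᴴ * M = 1 := by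
    rw [hMH, hMdef]
    calc star V * U * (star U * V) = star V * (U * star U) * V := by
          simp only [Matrix.mul_assoc]
      _ = 1 := by
        rw [Matrix.mem_unitaryGroup_iff.mp hρp.1.eigenvectorUnitary.2]
        simpa [Matrix.mul_assoc] using
          (Matrix.mem_unitaryGroup_iff'.mp hσp.1.eigenvectorUnitary.2 : star V * V = 1)
  have row : ∀ i, ∑ j, n i j = 1 := by
    intro i
    have h1 : (M * Mᴴ) i i = 1 := by rw [hMM]; simp
    rw [Matrix.mul_apply] at h1
    have h2 : ∑ j, ((n i j : ℝ) : ℂ) = 1 := by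
      rw [← h1]
      refine Finset.sum_congr rfl fun j _ => ?_
      simp only [hndef, Complex.normSq_eq_conj_mul_self, Matrix.conjTranspose_apply,
        Complex.star_def]
      ring
    exact_mod_cast h2
  have col : ∀ j, ∑ i, n i j = 1 := by
    intro j
    have h1 : (Mᴴ * M) j j = 1 := by rw [hMM']; simp
    rw [Matrix.mul_apply] at h1
    have h2 : ∑ i, ((n i j : ℝ) : ℂ) = 1 := by
      rw [← h1]
      refine Finset.sum_congr rfl fun i _ => ?_
      simp [hndef, Complex.normSq_eq_conj_mul_self, Matrix.conjTranspose_apply,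
        Complex.star_def]
    exact_mod_cast h2
  have sumlam : ∑ i, lam i = 1 := by
    have := (sum_eigenvalues_eq hρp.1).symm.trans hρt
    exact_mod_cast this
  have summu : ∑ j, mu j = 1 := by
    have := (sum_eigenvalues_eq hσp.1).symm.trans hσt
    exact_mod_cast this
  have hlam0 : ∀ i, 0 ≤ lam i := hρp.eigenvalues_nonneg
  have hmu0 : ∀ j, 0 ≤ mu j := hσp.eigenvalues_nonneg
  have hn0 : ∀ i j, 0 ≤ n i j := fun i j => Complex.normSq_nonneg _
  have hz : ∀ i j, mu j = 0 → lam i = 0 ∨ n i j = 0 := by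
    intro i j hm
    rcases supp_eigen hρp hσp hsupp i j hm with h | h
    · exact Or.inl h
    · refine Or.inr ?_
      have h' : M i j = 0 := h
      simp [hndef, h']
  -- compute the two traces
  have hL : (Matrix.trace (ρ * matLog σ)).re
      = ∑ i, ∑ j, lam i * Real.log (mu j) * n i j := by
    rw [trace_mul_matLog hρp hσp]
    have : (∑ i, ∑ j, (lam i : ℂ) * (Real.log (mu j) : ℂ) * ((n i j : ℝ) : ℂ))
        = ((∑ i, ∑ j, lam i * Real.log (mu j) * n i j : ℝ) : ℂ) := by
      push_cast; rfl
    rw [this, Complex.ofReal_re]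
  have hR : (Matrix.trace (ρ * matLog ρ)).re = ∑ i, lam i * Real.log (lam i) := by
    rw [trace_mul_matLog hρp hρp]
    have e : ∀ i, ∑ j, (lam i : ℂ) * (Real.log (lam j) : ℂ) *
        (Complex.normSq ((star U * U) i j) : ℂ) = ((lam i * Real.log (lam i) : ℝ) : ℂ) := by
      intro i
      have hterm : ∀ j, (lam i : ℂ) * (Real.log (lam j) : ℂ) *
          (Complex.normSq ((star U * U) i j) : ℂ)
          = if j = i then ((lam i * Real.log (lam i) : ℝ) : ℂ) else 0 := by
        intro j
        rw [hUU, Matrix.one_apply]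
        by_cases h : i = j
        · subst h
          simp only [if_pos rfl]
          norm_num [Complex.normSq]
        · rw [if_neg (fun hh : j = i => h hh.symm)]
          simp [h]
      rw [Finset.sum_congr rfl fun j _ => hterm j, Finset.sum_ite_eq',
        if_pos (Finset.mem_univ i)]
    rw [Finset.sum_congr rfl (fun i _ => e i)]
    rw [show (∑ i, ((lam i * Real.log (lam i) : ℝ) : ℂ))
        = ((∑ i, lam i * Real.log (lam i) : ℝ) : ℂ) by push_cast; rfl, Complex.ofReal_re]
  rw [hL, hR]
  -- termwise bound
  have key : ∀ i j, lam i * Real.log (mu j) * n i j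
      ≤ lam i * Real.log (lam i) * n i j + (mu j * n i j - lam i * n i j) := by
    intro i j
    by_cases hl : lam i = 0
    · simp only [hl, zero_mul, mul_zero, zero_add, sub_zero]
      exact mul_nonneg (hmu0 j) (hn0 i j)
    have hlpos : 0 < lam i := lt_of_le_of_ne (hlam0 i) (Ne.symm hl)
    by_cases hm : mu j = 0
    · rcases hz i j hm with h | h
      · exact absurd h hl
      · simp [h, hm]
    have hmpos : 0 < mu j := lt_of_le_of_ne (hmu0 j) (Ne.symm hm)
    have hlog : Real.log (mu j) - Real.log (lam i) ≤ mu j / lam i - 1 := by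
      rw [← Real.log_div (ne_of_gt hmpos) (ne_of_gt hlpos)]
      exact Real.log_le_sub_one_of_pos (div_pos hmpos hlpos)
    have h15 : lam i * n i j * (Real.log (mu j) - Real.log (lam i))
        ≤ lam i * n i j * (mu j / lam i - 1) :=
      mul_le_mul_of_nonneg_left hlog (mul_nonneg hlpos.le (hn0 i j))
    have h16 : lam i * n i j * (mu j / lam i - 1) = mu j * n i j - lam i * n i j := by
      field_simp
    nlinarith [h15, h16]
  have e1 : ∑ i, ∑ j, lam i * Real.log (lam i) * n i j = ∑ i, lam i * Real.log (lam i) := by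
    refine Finset.sum_congr rfl fun i _ => ?_
    rw [← Finset.mul_sum, row i, mul_one]
  have e2 : ∑ i, ∑ j, mu j * n i j = 1 := by
    rw [Finset.sum_comm]
    rw [show ∑ j, ∑ i, mu j * n i j = ∑ j, mu j from
      Finset.sum_congr rfl fun j _ => by rw [← Finset.mul_sum, col j, mul_one]]
    exact summu
  have e3 : ∑ i, ∑ j, lam i * n i j = 1 := by
    rw [show ∑ i, ∑ j, lam i * n i j = ∑ i, lam i from
      Finset.sum_congr rfl fun i _ => by rw [← Finset.mul_sum, row i, mul_one]]
    exact sumlam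
  calc ∑ i, ∑ j, lam i * Real.log (mu j) * n i j
      ≤ ∑ i, ∑ j, (lam i * Real.log (lam i) * n i j + (mu j * n i j - lam i * n i j)) :=
        Finset.sum_le_sum fun i _ => Finset.sum_le_sum fun j _ => key i j
    _ = (∑ i, ∑ j, lam i * Real.log (lam i) * n i j)
        + ((∑ i, ∑ j, mu j * n i j) - ∑ i, ∑ j, lam i * n i j) := by
        rw [← Finset.sum_sub_distrib, ← Finset.sum_add_distrib]
        simp [Finset.sum_add_distrib, Finset.sum_sub_distrib]
    _ = ∑ i, lam i * Real.log (lam i) := by rw [e1, e2, e3]; ring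

end AvgQMI
namespace AvgQMI

variable {ι : Type*} [Fintype ι] [DecidableEq ι]

lemma avg_isDensity {X : Type*} [Fintype X] (p : X → ℝ) (hp : ∀ x, 0 ≤ p x)
    (hpsum : ∑ x, p x = 1) (σ : X → Matrix ι ι ℂ) (hσ : ∀ x, IsDensity (σ x)) :
    IsDensity (∑ x, (p x : ℂ) • σ x) := by
  refine ⟨Matrix.PosSemidef.of_dotProduct_mulVec_nonneg ?_ ?_, ?_⟩
  · show star _ = _
    rw [star_sum]
    refine Finset.sum_congr rfl fun x _ => ?_
    rw [star_smul, Matrix.star_eq_conjTranspose, (hσ x).1.1]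
    simp [Complex.star_def, Complex.conj_ofReal]
  · intro v
    rw [sum_mulVec', dotProduct_sum']
    refine Finset.sum_nonneg fun x _ => ?_
    rw [Matrix.smul_mulVec, dotProduct_smul]
    exact smul_nonneg (by exact_mod_cast hp x) ((hσ x).1.dotProduct_mulVec_nonneg v)
  · rw [Matrix.trace_sum]
    have : ∀ x ∈ Finset.univ, Matrix.trace ((p x : ℂ) • σ x) = (p x : ℂ) := by
      intro x _
      rw [Matrix.trace_smul, (hσ x).2, smul_eq_mul, mul_one]
    rw [Finset.sum_congr rfl this]
    exact_mod_cast hpsum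

lemma suppLE_avg {X : Type*} [Fintype X] (p : X → ℝ) (hp : ∀ x, 0 ≤ p x)
    (σ : X → Matrix ι ι ℂ) (hσ : ∀ x, (σ x).PosSemidef) (x : X) (hx : p x ≠ 0) :
    SuppLE (σ x) (∑ y, (p y : ℂ) • σ y) := by
  intro v hv
  rw [← (hσ x).dotProduct_mulVec_zero_iff]
  have h0 : dotProduct (star v) ((∑ y, (p y : ℂ) • σ y).mulVec v) = 0 := by
    rw [hv, dotProduct_zero]
  rw [sum_mulVec', dotProduct_sum'] at h0
  have hterm : ∀ y ∈ Finset.univ,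
      0 ≤ dotProduct (star v) (((p y : ℂ) • σ y).mulVec v) := by
    intro y _
    rw [Matrix.smul_mulVec, dotProduct_smul]
    exact smul_nonneg (by exact_mod_cast hp y) ((hσ y).dotProduct_mulVec_nonneg v)
  have := (Finset.sum_eq_zero_iff_of_nonneg hterm).mp h0 x (Finset.mem_univ x)
  rw [Matrix.smul_mulVec, dotProduct_smul, smul_eq_mul] at this
  have hpx : (p x : ℂ) ≠ 0 := by exact_mod_cast hx
  exact (mul_eq_zero.mp this).resolve_left hpx

lemma vnEntropy_concave {X : Type*} [Fintype X] (p : X → ℝ) (hp : ∀ x, 0 ≤ p x)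
    (hpsum : ∑ x, p x = 1) (σ : X → Matrix ι ι ℂ) (hσ : ∀ x, IsDensity (σ x)) :
    ∑ x, p x * vnEntropy (σ x) ≤ vnEntropy (∑ x, (p x : ℂ) • σ x) := by
  set ρbar := ∑ x, (p x : ℂ) • σ x with hbardef
  have hbar : IsDensity ρbar := avg_isDensity p hp hpsum σ hσ
  have hlin : Matrix.trace (ρbar * matLog ρbar)
      = ∑ x, (p x : ℂ) * Matrix.trace (σ x * matLog ρbar) := by
    rw [hbardef, Finset.sum_mul, Matrix.trace_sum]
    refine Finset.sum_congr rfl fun x _ => ?_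
    rw [Matrix.smul_mul, Matrix.trace_smul, smul_eq_mul]
  have hre : vnEntropy ρbar = -∑ x, p x * (Matrix.trace (σ x * matLog ρbar)).re := by
    rw [vnEntropy, hlin, Complex.re_sum]
    congr 1
    refine Finset.sum_congr rfl fun x _ => ?_
    rw [Complex.mul_re, Complex.ofReal_re, Complex.ofReal_im]
    ring
  rw [hre]
  have h1 : ∑ x, p x * vnEntropy (σ x)
      = -∑ x, p x * (Matrix.trace (σ x * matLog (σ x))).re := by
    rw [← Finset.sum_neg_distrib]
    refine Finset.sum_congr rfl fun x _ => ?_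
    rw [vnEntropy]; ring
  have key : ∀ x, p x * (Matrix.trace (σ x * matLog ρbar)).re
      ≤ p x * (Matrix.trace (σ x * matLog (σ x))).re := by
    intro x
    by_cases hx : p x = 0
    · simp [hx]
    · exact mul_le_mul_of_nonneg_left
        (klein (hσ x) hbar (suppLE_avg p hp σ (fun y => (hσ y).1) x hx)) (hp x)
  rw [h1]
  exact neg_le_neg (Finset.sum_le_sum fun x _ => key x)

end AvgQMI
namespace AvgQMI

variable {α β : Type*} [Fintype α] [Fintype β]

lemma ptraceSnd_isDensity [DecidableEq β] {ρ : Matrix (α × β) (α × β) ℂ}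
    (hρ : IsDensity ρ) : IsDensity (ptraceSnd ρ) := by
  refine ⟨Matrix.PosSemidef.of_dotProduct_mulVec_nonneg ?_ ?_, ?_⟩
  · ext i j
    simp only [Matrix.conjTranspose_apply, ptraceSnd, Matrix.of_apply, star_sum]
    refine Finset.sum_congr rfl fun b _ => ?_
    exact hρ.1.1.apply (i, b) (j, b)
  · intro v
    have hterm : ∀ b : β,
        dotProduct (star (fun q : α × β => if q.2 = b then v q.1 else 0))
          (ρ.mulVec (fun q : α × β => if q.2 = b then v q.1 else 0))
        = ∑ i, ∑ j, (starRingEnd ℂ) (v i) * (ρ (i, b) (j, b) * v j) := by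
      intro b
      simp only [dotProduct, Matrix.mulVec, Pi.star_apply, Complex.star_def,
        Fintype.sum_prod_type, apply_ite (starRingEnd ℂ), map_zero, mul_ite, mul_zero,
        ite_mul, zero_mul, Finset.sum_ite_irrel, Finset.sum_const_zero, Finset.sum_ite_eq',
        Finset.mem_univ, if_true, Finset.mul_sum]
    have hsplit : dotProduct (star v) ((ptraceSnd ρ).mulVec v)
        = ∑ b : β, ∑ i, ∑ j, (starRingEnd ℂ) (v i) * (ρ (i, b) (j, b) * v j) := by
      simp only [dotProduct, Matrix.mulVec, ptraceSnd, Matrix.of_apply,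
        Pi.star_apply, Complex.star_def, Finset.sum_mul, Finset.mul_sum]
      trans ∑ i, ∑ b : β, ∑ j, (starRingEnd ℂ) (v i) * (ρ (i, b) (j, b) * v j)
      · exact Finset.sum_congr rfl fun i _ => Finset.sum_comm
      · exact Finset.sum_comm
    rw [hsplit]
    refine Finset.sum_nonneg fun b _ => ?_
    rw [← hterm b]
    exact hρ.1.dotProduct_mulVec_nonneg _
  · have : Matrix.trace (ptraceSnd ρ) = Matrix.trace ρ := by
      simp only [Matrix.trace, Matrix.diag_apply, ptraceSnd, Matrix.of_apply,
        Fintype.sum_prod_type]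
    rw [this, hρ.2]

lemma ptraceFst_isDensity [DecidableEq α] {ρ : Matrix (α × β) (α × β) ℂ}
    (hρ : IsDensity ρ) : IsDensity (ptraceFst ρ) := by
  refine ⟨Matrix.PosSemidef.of_dotProduct_mulVec_nonneg ?_ ?_, ?_⟩
  · ext i j
    simp only [Matrix.conjTranspose_apply, ptraceFst, Matrix.of_apply, star_sum]
    refine Finset.sum_congr rfl fun a _ => ?_
    exact hρ.1.1.apply (a, i) (a, j)
  · intro v
    have hterm : ∀ a : α,
        dotProduct (star (fun q : α × β => if q.1 = a then v q.2 else 0))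
          (ρ.mulVec (fun q : α × β => if q.1 = a then v q.2 else 0))
        = ∑ i, ∑ j, (starRingEnd ℂ) (v i) * (ρ (a, i) (a, j) * v j) := by
      intro a
      simp only [dotProduct, Matrix.mulVec, Pi.star_apply, Complex.star_def,
        Fintype.sum_prod_type, apply_ite (starRingEnd ℂ), map_zero, mul_ite, mul_zero,
        ite_mul, zero_mul, Finset.sum_ite_irrel, Finset.sum_const_zero, Finset.sum_ite_eq',
        Finset.sum_ite_eq, Finset.mem_univ, if_true, Finset.mul_sum]
    have hsplit : dotProduct (star v) ((ptraceFst ρ).mulVec v)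
        = ∑ a : α, ∑ i, ∑ j, (starRingEnd ℂ) (v i) * (ρ (a, i) (a, j) * v j) := by
      simp only [dotProduct, Matrix.mulVec, ptraceFst, Matrix.of_apply,
        Pi.star_apply, Complex.star_def, Finset.sum_mul, Finset.mul_sum]
      trans ∑ i, ∑ a : α, ∑ j, (starRingEnd ℂ) (v i) * (ρ (a, i) (a, j) * v j)
      · exact Finset.sum_congr rfl fun i _ => Finset.sum_comm
      · exact Finset.sum_comm
    rw [hsplit]
    refine Finset.sum_nonneg fun a _ => ?_
    rw [← hterm a]
    exact hρ.1.dotProduct_mulVec_nonneg _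
  · have : Matrix.trace (ptraceFst ρ) = Matrix.trace ρ := by
      simp only [Matrix.trace, Matrix.diag_apply, ptraceFst, Matrix.of_apply,
        Fintype.sum_prod_type]
      exact Finset.sum_comm
    rw [this, hρ.2]

lemma ptraceSnd_sum {X : Type*} [Fintype X] (c : X → ℂ)
    (ρ : X → Matrix (α × β) (α × β) ℂ) :
    ptraceSnd (∑ x, c x • ρ x) = ∑ x, c x • ptraceSnd (ρ x) := by
  ext i j
  simp only [ptraceSnd, Matrix.of_apply, Matrix.sum_apply, Matrix.smul_apply,
    smul_eq_mul, Finset.mul_sum]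
  exact Finset.sum_comm

lemma ptraceFst_sum {X : Type*} [Fintype X] (c : X → ℂ)
    (ρ : X → Matrix (α × β) (α × β) ℂ) :
    ptraceFst (∑ x, c x • ρ x) = ∑ x, c x • ptraceFst (ρ x) := by
  ext i j
  simp only [ptraceFst, Matrix.of_apply, Matrix.sum_apply, Matrix.smul_apply,
    smul_eq_mul, Finset.mul_sum]
  exact Finset.sum_comm

end AvgQMI

/-- **Average mutual information bound.** For a finite ensemble of bipartite
states `{(p x, ρ x)}` with average `ρ̄`,
`Σ p x I(A;B)_{ρ x} ≤ I(A;B)_{ρ̄} + χ({p x, ρ x})`, where the Holevo information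
is `χ = H(ρ̄) − Σ p x H(ρ x)`. -/
theorem avg_qmi_le_qmi_avg_add_holevo {X : Type*} [Fintype X] {a b : ℕ}
    (p : X → ℝ) (hp : ∀ x, 0 ≤ p x) (hpsum : ∑ x, p x = 1)
    (ρ : X → Matrix (Fin a × Fin b) (Fin a × Fin b) ℂ)
    (hρ : ∀ x, IsDensity (ρ x)) :
    ∑ x, p x * qmi (ρ x)
      ≤ qmi (∑ x, (p x : ℂ) • ρ x)
        + (vnEntropy (∑ x, (p x : ℂ) • ρ x) - ∑ x, p x * vnEntropy (ρ x)) := by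
  have hA : ∑ x, p x * vnEntropy (ptraceSnd (ρ x))
      ≤ vnEntropy (ptraceSnd (∑ x, (p x : ℂ) • ρ x)) := by
    rw [AvgQMI.ptraceSnd_sum]
    exact AvgQMI.vnEntropy_concave p hp hpsum _
      (fun x => AvgQMI.ptraceSnd_isDensity (hρ x))
  have hB : ∑ x, p x * vnEntropy (ptraceFst (ρ x))
      ≤ vnEntropy (ptraceFst (∑ x, (p x : ℂ) • ρ x)) := by
    rw [AvgQMI.ptraceFst_sum]
    exact AvgQMI.vnEntropy_concave p hp hpsum _
      (fun x => AvgQMI.ptraceFst_isDensity (hρ x))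
  simp only [qmi]
  have hsplit : ∑ x, p x * (vnEntropy (ptraceSnd (ρ x)) + vnEntropy (ptraceFst (ρ x))
        - vnEntropy (ρ x))
      = (∑ x, p x * vnEntropy (ptraceSnd (ρ x)))
        + (∑ x, p x * vnEntropy (ptraceFst (ρ x))) - ∑ x, p x * vnEntropy (ρ x) := by
    rw [eq_comm, ← Finset.sum_add_distrib, ← Finset.sum_sub_distrib]
    exact Finset.sum_congr rfl fun x _ => by ring
  rw [hsplit]
  linarith
end
end
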